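/- Let N ≥ 0 and let k0, k1, …, kN be positive integers with gcd(k0, …, kN) = n. Then there exists a matrix X in SL(N+1, ℤ) all of whose entries are non-negative such that X applied to the column vector (n, n, …, n) (with N+1 coordinates) equals the column vector (k0, k1, …, kN). -/

import Mathlib

lemma gcd_update_sub {α : Type*} [DecidableEq α] (s : Finset α) (m : α → ℕ) (i j : α)
    (hi : i ∈ s) (hj : j ∈ s) (hij : i ≠ j) (hle : m j ≤ m i) :
    s.gcd (Function.update m i (m i - m j)) = s.gcd m := by
  apply Nat.dvd_antisymm
  · apply Finset.dvd_gcd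
    intro a ha
    rcases eq_or_ne a i with rfl | h
    · have h1 : s.gcd (Function.update m a (m a - m j)) ∣ m a - m j := by
        have := Finset.gcd_dvd (f := Function.update m a (m a - m j)) ha
        simpa using this
      have h2 : s.gcd (Function.update m a (m a - m j)) ∣ m j := by
        have := Finset.gcd_dvd (f := Function.update m a (m a - m j)) hj
        rwa [Function.update_of_ne (Ne.symm hij)] at this
      have := dvd_add h1 h2
      rwa [Nat.sub_add_cancel hle] at this
    · have := Finset.gcd_dvd (f := Function.update m i (m i - m j)) ha
      rwa [Function.update_of_ne h] at this
  · apply Finset.dvd_gcd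
    intro a ha
    rcases eq_or_ne a i with rfl | h
    · rw [Function.update_self]
      exact Nat.dvd_sub (Finset.gcd_dvd ha) (Finset.gcd_dvd hj)
    · rw [Function.update_of_ne h]
      exact Finset.gcd_dvd ha

lemma aux_rowsum (N : ℕ) : ∀ s (m : Fin (N + 1) → ℕ), (∑ i, m i) = s →
    (∀ i, 0 < m i) → Finset.univ.gcd m = 1 →
    ∃ X : Matrix.SpecialLinearGroup (Fin (N + 1)) ℤ,
      (∀ i j, 0 ≤ (X : Matrix (Fin (N + 1)) (Fin (N + 1)) ℤ) i j) ∧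
      ∀ i, (∑ j, (X : Matrix (Fin (N + 1)) (Fin (N + 1)) ℤ) i j) = (m i : ℤ) := by
  intro s
  induction s using Nat.strong_induction_on with
  | _ s ih =>
    intro m hsum hpos hgcd
    by_cases hconst : ∀ i j, m i ≤ m j
    · -- all equal, hence all 1
      have hone : ∀ i, m i = 1 := by
        intro i
        have : m i ∣ Finset.univ.gcd m := by
          apply Finset.dvd_gcd
          intro j _
          exact dvd_of_eq (Nat.le_antisymm (hconst i j) (hconst j i))
        rw [hgcd] at this
        exact Nat.dvd_one.mp this
      refine ⟨1, ?_, ?_⟩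
      · intro a b
        simp [Matrix.one_apply]
        split <;> norm_num
      · intro a
        simp [Matrix.one_apply, hone a]
    · push_neg at hconst
      obtain ⟨i, j, hlt⟩ := hconst
      have hij : i ≠ j := by rintro rfl; exact absurd hlt (lt_irrefl _)
      set m' := Function.update m i (m i - m j) with hm'
      have hle : m j ≤ m i := le_of_lt hlt
      have hpos' : ∀ a, 0 < m' a := by
        intro a
        rcases eq_or_ne a i with rfl | h
        · simpa [hm'] using Nat.sub_pos_of_lt hlt
        · simpa [hm', Function.update_of_ne h] using hpos a
      have hgcd' : Finset.univ.gcd m' = 1 := by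
        rw [hm', gcd_update_sub _ _ _ _ (Finset.mem_univ i) (Finset.mem_univ j) hij hle, hgcd]
      have hlt' : (∑ a, m' a) < s := by
        rw [← hsum]
        apply Finset.sum_lt_sum
        · intro a _
          rcases eq_or_ne a i with rfl | h
          · simp only [hm', Function.update_self]; omega
          · simp [hm', Function.update_of_ne h]
        · refine ⟨i, Finset.mem_univ i, ?_⟩
          simp only [hm', Function.update_self]
          have := hpos j
          omega
      obtain ⟨X', hX'pos, hX'row⟩ := ih _ hlt' m' rfl hpos' hgcd'
      have hdet : (Matrix.transvection i j (1 : ℤ)).det = 1 :=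
        Matrix.det_transvection_of_ne i j hij 1
      refine ⟨(@id (Matrix.SpecialLinearGroup (Fin (N+1)) ℤ) ⟨Matrix.transvection i j 1, hdet⟩) * X', ?_, ?_⟩
      · intro a b
        rcases eq_or_ne a i with rfl | h
        · have : (((@id (Matrix.SpecialLinearGroup (Fin (N+1)) ℤ) ⟨Matrix.transvection a j 1, hdet⟩) * X' : Matrix.SpecialLinearGroup (Fin (N+1)) ℤ) : Matrix (Fin (N+1)) (Fin (N+1)) ℤ) a b = (X' : Matrix _ _ ℤ) a b + 1 * (X' : Matrix _ _ ℤ) j b := by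
            rw [Matrix.SpecialLinearGroup.coe_mul]
            exact Matrix.transvection_mul_apply_same a j b 1 _
          rw [this]
          have := hX'pos a b; have := hX'pos j b; linarith
        · have : (((@id (Matrix.SpecialLinearGroup (Fin (N+1)) ℤ) ⟨Matrix.transvection i j 1, hdet⟩) * X' : Matrix.SpecialLinearGroup (Fin (N+1)) ℤ) : Matrix (Fin (N+1)) (Fin (N+1)) ℤ) a b = (X' : Matrix _ _ ℤ) a b := by
            rw [Matrix.SpecialLinearGroup.coe_mul]
            exact Matrix.transvection_mul_apply_of_ne i j a b h 1 _
          rw [this]; exact hX'pos a b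
      · intro a
        rcases eq_or_ne a i with rfl | h
        · have : ∀ b, (((@id (Matrix.SpecialLinearGroup (Fin (N+1)) ℤ) ⟨Matrix.transvection a j 1, hdet⟩) * X' : Matrix.SpecialLinearGroup (Fin (N+1)) ℤ) : Matrix (Fin (N+1)) (Fin (N+1)) ℤ) a b = (X' : Matrix _ _ ℤ) a b + 1 * (X' : Matrix _ _ ℤ) j b := by
            intro b
            rw [Matrix.SpecialLinearGroup.coe_mul]
            exact Matrix.transvection_mul_apply_same a j b 1 _
          simp only [this, one_mul, Finset.sum_add_distrib, hX'row]
          have h1 : m' a = m a - m j := by simp [hm']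
          have h2 : m' j = m j := by simp [hm', Function.update_of_ne (Ne.symm hij)]
          rw [h1, h2]
          have := Nat.sub_add_cancel hle
          omega
        · have : ∀ b, (((@id (Matrix.SpecialLinearGroup (Fin (N+1)) ℤ) ⟨Matrix.transvection i j 1, hdet⟩) * X' : Matrix.SpecialLinearGroup (Fin (N+1)) ℤ) : Matrix (Fin (N+1)) (Fin (N+1)) ℤ) a b = (X' : Matrix _ _ ℤ) a b := by
            intro b
            rw [Matrix.SpecialLinearGroup.coe_mul]
            exact Matrix.transvection_mul_apply_of_ne i j a b h 1 _
          simp only [this, hX'row]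
          simp [hm', Function.update_of_ne h]

/-- For positive integers `k 0, …, k N` with gcd `n`, there is a matrix
`X ∈ SL(N+1, ℤ)` with non-negative entries sending the constant vector `(n, …, n)` to
`(k 0, …, k N)`. -/
theorem exists_sln_nonneg_mulVec_gcd (N : ℕ) (k : Fin (N + 1) → ℕ) (hk : ∀ i, 0 < k i)
    (n : ℕ) (hn : Finset.univ.gcd k = n) :
    ∃ X : Matrix.SpecialLinearGroup (Fin (N + 1)) ℤ,
      (∀ i j, 0 ≤ (X : Matrix (Fin (N + 1)) (Fin (N + 1)) ℤ) i j) ∧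
      (X : Matrix (Fin (N + 1)) (Fin (N + 1)) ℤ).mulVec (fun _ => (n : ℤ))
        = fun i => (k i : ℤ) := by
  have hn0 : 0 < n := by
    rcases Nat.eq_zero_or_pos n with h | h
    · exfalso
      rw [h] at hn
      have h0 := (Finset.gcd_eq_zero_iff.mp hn) 0 (Finset.mem_univ 0)
      exact (hk 0).ne' h0
    · exact h
  set m : Fin (N + 1) → ℕ := fun i => k i / n with hm
  have hkm : ∀ i, k i = n * m i := by
    intro i
    have : n ∣ k i := hn ▸ Finset.gcd_dvd (Finset.mem_univ i)
    rw [hm]; exact (Nat.mul_div_cancel' this).symm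
  have hmpos : ∀ i, 0 < m i := by
    intro i
    rcases Nat.eq_zero_or_pos (m i) with h | h
    · exfalso; have h2 := hkm i; rw [h, Nat.mul_zero] at h2; exact (hk i).ne' h2
    · exact h
  have hgcdm : Finset.univ.gcd m = 1 := by
    have : Finset.univ.gcd (fun i => n * m i) = n * Finset.univ.gcd m := by
      simpa using Finset.gcd_mul_left (s := (Finset.univ : Finset (Fin (N+1)))) (f := m) (a := n)
    have h2 : Finset.univ.gcd (fun i => n * m i) = n := by
      rw [show (fun i => n * m i) = k from funext fun i => (hkm i).symm, hn]
    rw [this] at h2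
    exact Nat.eq_of_mul_eq_mul_left hn0 (by rw [h2, Nat.mul_one])
  obtain ⟨X, hXpos, hXrow⟩ := aux_rowsum N (∑ i, m i) m rfl hmpos hgcdm
  refine ⟨X, hXpos, ?_⟩
  funext a
  rw [Matrix.mulVec]
  simp only [dotProduct]
  rw [show (∑ b, (X : Matrix (Fin (N+1)) (Fin (N+1)) ℤ) a b * n) = (∑ b, (X : Matrix (Fin (N+1)) (Fin (N+1)) ℤ) a b) * n by rw [Finset.sum_mul]]
  rw [hXrow a, hkm a]
  push_cast; ring
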